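/- arXiv:2006.13690 — 3 statements merged into one kernel-verified Lean document; each statement's English description precedes it below -/
import Mathlib

section
/- The image of the map from the integers to the integers modulo 16256 given by k ↦ k(k+1) mod 16256 has exactly 4096 elements. -/
set_option maxRecDepth 100000

lemma shimada_aux1 :
    (Finset.image (fun a : ZMod 128 => a * (a + 1)) Finset.univ).card = 64 := by decide

lemma shimada_aux2 :
    (Finset.image (fun a : ZMod 127 => a * (a + 1)) Finset.univ).card = 64 := by decide

/-- The image of the map `ℤ → ZMod 16256`, `k ↦ k(k+1)`, has exactly 4096 elements. -/
theorem shimada_sphere_count :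
    (Set.range fun k : ℤ => ((k * (k + 1) : ℤ) : ZMod 16256)).ncard = 4096 := by
  have key : (Set.range fun k : ℤ => ((k * (k + 1) : ℤ) : ZMod 16256))
      = Set.range (fun x : ZMod 16256 => x * (x + 1)) := by
    ext x
    simp only [Set.mem_range]
    constructor
    · rintro ⟨k, rfl⟩; exact ⟨(k : ZMod 16256), by push_cast; ring⟩
    · rintro ⟨k, rfl⟩
      obtain ⟨m, rfl⟩ := ZMod.intCast_surjective (n := 16256) k
      exact ⟨m, by push_cast; ring⟩
  rw [key]
  have e : ZMod 16256 ≃+* ZMod 128 × ZMod 127 :=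
    ZMod.chineseRemainder (show Nat.Coprime 128 127 by decide)
  rw [← Set.ncard_image_of_injective _ e.injective]
  have himg : e '' Set.range (fun x : ZMod 16256 => x * (x + 1))
      = Set.range (Prod.map (fun a : ZMod 128 => a * (a + 1))
          (fun b : ZMod 127 => b * (b + 1))) := by
    rw [← Set.range_comp]
    ext p
    simp only [Set.mem_range, Function.comp]
    constructor
    · rintro ⟨x, rfl⟩
      refine ⟨e x, ?_⟩
      have : e (x * (x + 1)) = e x * (e x + 1) := by
        rw [map_mul, map_add, map_one]
      rw [this]
      ext <;> simp [Prod.map]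
    · rintro ⟨p, rfl⟩
      obtain ⟨x, rfl⟩ := e.surjective p
      refine ⟨x, ?_⟩
      have : e (x * (x + 1)) = e x * (e x + 1) := by
        rw [map_mul, map_add, map_one]
      rw [this]
      ext <;> simp [Prod.map]
  rw [himg, Set.range_prodMap]
  have h1 : Set.range (fun a : ZMod 128 => a * (a + 1))
      = ↑(Finset.image (fun a : ZMod 128 => a * (a + 1)) Finset.univ) := by
    rw [Finset.coe_image, Finset.coe_univ, Set.image_univ]
  have h2 : Set.range (fun b : ZMod 127 => b * (b + 1))
      = ↑(Finset.image (fun b : ZMod 127 => b * (b + 1)) Finset.univ) := by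
    rw [Finset.coe_image, Finset.coe_univ, Set.image_univ]
  rw [h1, h2, ← Finset.coe_product, Set.ncard_coe_finset, Finset.card_product,
    shimada_aux1, shimada_aux2]
end

section
/- For all integers k₀ and k₁, if k₀(k₀+1) ≡ k₁(k₁+1) (mod 56), then the unordered pair of residues modulo 224 given by ((2k₀(k₀+1) + 7(2k₀+1)) mod 224, (2k₀(k₀+1) − 7(2k₀+1)) mod 224) is equal to the unordered pair ((2k₁(k₁+1) + 7(2k₁+1)) mod 224, (2k₁(k₁+1) − 7(2k₁+1)) mod 224). -/
set_option maxRecDepth 20000 in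
private lemma milnor_key : ∀ x y : ZMod 112,
    ((x.val * (x.val + 1) : ℕ) : ZMod 56) = ((y.val * (y.val + 1) : ℕ) : ZMod 56) →
    (((2 * x.val * (x.val + 1) + 7 * (2 * x.val + 1) : ℕ) : ZMod 224) =
       ((2 * y.val * (y.val + 1) + 7 * (2 * y.val + 1) : ℕ) : ZMod 224) ∧
     ((2 * x.val * (x.val + 1) : ℕ) : ZMod 224) - ((7 * (2 * x.val + 1) : ℕ) : ZMod 224) =
       ((2 * y.val * (y.val + 1) : ℕ) : ZMod 224) - ((7 * (2 * y.val + 1) : ℕ) : ZMod 224)) ∨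
    (((2 * x.val * (x.val + 1) + 7 * (2 * x.val + 1) : ℕ) : ZMod 224) =
       ((2 * y.val * (y.val + 1) : ℕ) : ZMod 224) - ((7 * (2 * y.val + 1) : ℕ) : ZMod 224) ∧
     ((2 * x.val * (x.val + 1) : ℕ) : ZMod 224) - ((7 * (2 * x.val + 1) : ℕ) : ZMod 224) =
       ((2 * y.val * (y.val + 1) + 7 * (2 * y.val + 1) : ℕ) : ZMod 224)) := by decide

private lemma milnor_exists_rep (k : ℤ) :
    ∃ t : ℤ, k = ((k : ZMod 112).val : ℤ) + 112 * t := by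
  have h : (((k : ZMod 112).val : ℤ) : ZMod 112) = (k : ZMod 112) := by
    push_cast
    simp [ZMod.natCast_val, ZMod.cast_id]
  obtain ⟨t, ht⟩ := (ZMod.intCast_zmod_eq_zero_iff_dvd (k - ((k : ZMod 112).val : ℤ)) 112).mp
    (by push_cast [h]; ring_nf)
  refine ⟨t, by push_cast at ht; linarith⟩

private lemma milnor_castH (k : ℤ) (r : ℕ) (t : ℤ) (hk : k = (r : ℤ) + 112 * t) :
    ((k * (k + 1) : ℤ) : ZMod 56) = ((r * (r + 1) : ℕ) : ZMod 56) := by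
  have h56 : ((56 : ZMod 56)) = 0 := by decide
  have e : (k * (k + 1) : ℤ) =
      ((r : ℤ) * (r + 1)) + 56 * (2 * t * (2 * (r : ℤ) + 112 * t + 1)) := by
    subst hk; ring
  rw [e]
  push_cast
  rw [h56]
  ring

private lemma milnor_castA (k : ℤ) (r : ℕ) (t : ℤ) (hk : k = (r : ℤ) + 112 * t) :
    ((2 * k * (k + 1) + 7 * (2 * k + 1) : ℤ) : ZMod 224) =
      ((2 * r * (r + 1) + 7 * (2 * r + 1) : ℕ) : ZMod 224) := by
  have h224 : ((224 : ZMod 224)) = 0 := by decide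
  have e : (2 * k * (k + 1) + 7 * (2 * k + 1) : ℤ) =
      (2 * (r : ℤ) * (r + 1) + 7 * (2 * (r : ℤ) + 1)) +
        224 * (t * (2 * (r : ℤ) + 112 * t + 1) + 7 * t) := by
    subst hk; ring
  rw [e]
  push_cast
  rw [h224]
  ring

private lemma milnor_castB (k : ℤ) (r : ℕ) (t : ℤ) (hk : k = (r : ℤ) + 112 * t) :
    ((2 * k * (k + 1) - 7 * (2 * k + 1) : ℤ) : ZMod 224) =
      ((2 * r * (r + 1) : ℕ) : ZMod 224) - ((7 * (2 * r + 1) : ℕ) : ZMod 224) := by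
  have h224 : ((224 : ZMod 224)) = 0 := by decide
  have e : (2 * k * (k + 1) - 7 * (2 * k + 1) : ℤ) =
      (2 * (r : ℤ) * (r + 1) - 7 * (2 * (r : ℤ) + 1)) +
        224 * (t * (2 * (r : ℤ) + 112 * t + 1) - 7 * t) := by
    subst hk; ring
  rw [e]
  push_cast
  rw [h224]
  ring

/-- If `k₀(k₀+1) ≡ k₁(k₁+1) (mod 56)`, then the unordered pairs of residues
`(2kᵢ(kᵢ+1) ± 7(2kᵢ+1)) mod 224` coincide. -/
theorem milnor_proj_eells_kuiper (k₀ k₁ : ℤ)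
    (h : ((k₀ * (k₀ + 1) : ℤ) : ZMod 56) = ((k₁ * (k₁ + 1) : ℤ) : ZMod 56)) :
    (s(((2 * k₀ * (k₀ + 1) + 7 * (2 * k₀ + 1) : ℤ) : ZMod 224),
       ((2 * k₀ * (k₀ + 1) - 7 * (2 * k₀ + 1) : ℤ) : ZMod 224)) : Sym2 (ZMod 224)) =
    (s(((2 * k₁ * (k₁ + 1) + 7 * (2 * k₁ + 1) : ℤ) : ZMod 224),
       ((2 * k₁ * (k₁ + 1) - 7 * (2 * k₁ + 1) : ℤ) : ZMod 224)) : Sym2 (ZMod 224)) := by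
  obtain ⟨t₀, ht₀⟩ := milnor_exists_rep k₀
  obtain ⟨t₁, ht₁⟩ := milnor_exists_rep k₁
  set r₀ : ℕ := (k₀ : ZMod 112).val with hr₀
  set r₁ : ℕ := (k₁ : ZMod 112).val with hr₁
  have h' : ((r₀ * (r₀ + 1) : ℕ) : ZMod 56) = ((r₁ * (r₁ + 1) : ℕ) : ZMod 56) := by
    rw [← milnor_castH k₀ r₀ t₀ ht₀, ← milnor_castH k₁ r₁ t₁ ht₁]
    exact h
  rw [milnor_castA k₀ r₀ t₀ ht₀, milnor_castB k₀ r₀ t₀ ht₀,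
      milnor_castA k₁ r₁ t₁ ht₁, milnor_castB k₁ r₁ t₁ ht₁]
  rw [Sym2.eq_iff]
  exact milnor_key (k₀ : ZMod 112) (k₁ : ZMod 112) h'
end

section
/- Let s and t be quaternions, let k be a natural number, and let σ be a real number with 0 < σ < 1 such that normSq(s) = σ(1−σ) (in particular s ≠ 0). Then Re( star(s) · ( (1/‖s‖) • ( s^(k+1) · t · (s^k)⁻¹ ) ) ) / √(1−σ) = √σ · Re(t), where star denotes quaternionic conjugation, ‖s‖ is the quaternionic norm, and • is scalar multiplication by a real number. -/
open scoped Quaternion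

lemma quaternion_re_mul_comm (a b : ℍ[ℝ]) : (a * b).re = (b * a).re := by
  simp [Quaternion.re_mul]; ring

/-- If `normSq s = σ(1−σ)` with `0 < σ < 1`, then
`Re(star s * ((1/‖s‖) • (s^(k+1) * t * (s^k)⁻¹))) / √(1−σ) = √σ * Re t`. -/
theorem quaternion_morse_well_defined (s t : ℍ[ℝ]) (k : ℕ) (σ : ℝ)
    (h0 : 0 < σ) (h1 : σ < 1) (hs : Quaternion.normSq s = σ * (1 - σ)) :
    (star s * ((1 / ‖s‖) • (s ^ (k + 1) * t * (s ^ k)⁻¹))).re / Real.sqrt (1 - σ) =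
      Real.sqrt σ * t.re := by
  have hns : Quaternion.normSq s ≠ 0 := by
    rw [hs]; nlinarith
  have hsne : s ≠ 0 := fun h => hns (by simp [h])
  have hk : (s ^ k : ℍ[ℝ]) ≠ 0 := pow_ne_zero _ hsne
  have key : star s * ((1 / ‖s‖) • (s ^ (k + 1) * t * (s ^ k)⁻¹))
      = (1 / ‖s‖) • (((Quaternion.normSq s : ℝ) : ℍ[ℝ]) * (s ^ k * t * (s ^ k)⁻¹)) := by
    rw [mul_smul_comm]
    congr 1
    rw [pow_succ', ← mul_assoc, ← mul_assoc, ← mul_assoc, ← Quaternion.star_mul_self, mul_assoc]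
    noncomm_ring
  have hre : (s ^ k * t * (s ^ k)⁻¹).re = t.re := by
    rw [quaternion_re_mul_comm, ← mul_assoc, inv_mul_cancel₀ hk, one_mul]
  rw [key, Quaternion.re_smul, Quaternion.coe_mul_eq_smul, Quaternion.re_smul, hre]
  have hnorm : ‖s‖ = Real.sqrt (σ * (1 - σ)) := by
    rw [norm_eq_sqrt_real_inner, Quaternion.inner_self, hs]
  rw [hnorm, hs, Real.sqrt_mul h0.le]
  have h1' : (0:ℝ) < 1 - σ := by linarith
  have hsq : Real.sqrt σ > 0 := Real.sqrt_pos.mpr h0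
  have hsq1 : Real.sqrt (1 - σ) > 0 := Real.sqrt_pos.mpr h1'
  have e1 : Real.sqrt σ * Real.sqrt σ = σ := Real.mul_self_sqrt h0.le
  have e2 : Real.sqrt (1 - σ) * Real.sqrt (1 - σ) = 1 - σ := Real.mul_self_sqrt h1'.le
  field_simp
  have h3 : Real.sqrt σ * t.re * (Real.sqrt σ * Real.sqrt (1 - σ) * Real.sqrt (1 - σ))
      = (Real.sqrt σ * Real.sqrt σ) * ((Real.sqrt (1 - σ) * Real.sqrt (1 - σ)) * t.re) := by ring
  simp only [smul_eq_mul]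
  rw [div_mul_eq_mul_div, one_mul, div_eq_iff (by positivity)]
  linear_combination (-t.re * Real.sqrt (1 - σ) * Real.sqrt (1 - σ)) * e1 + (-t.re * σ) * e2
end
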